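/- Let N = 2 and β, β′ ∈ ℝ, and let ρ be a density matrix on ℂ²⊗ℂ² with L*(ρ) = 0 for the two-bath adjoint Lindblad generator (baths at sites 1 and 2). Then the local states of ρ are: for every 2×2 matrix A, Tr(ρ·(A⊗I)) = Tr(ρ^{(1)}·A) and Tr(ρ·(I⊗A)) = Tr(ρ^{(2)}·A), where ρ^{(1)} = (ρ_β+ρ_{β′})/2 + (1/2)·(ρ_β−ρ_{β′})/2 and ρ^{(2)} = (ρ_β+ρ_{β′})/2 + (1/2)·(ρ_{β′}−ρ_β)/2. -/

import Mathlib

open Matrix Complex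
open scoped Kronecker ComplexOrder

noncomputable section

def sx : Matrix (Fin 2) (Fin 2) ℂ := !![0, 1; 1, 0]
def sy : Matrix (Fin 2) (Fin 2) ℂ := !![0, -Complex.I; Complex.I, 0]
def sz : Matrix (Fin 2) (Fin 2) ℂ := !![1, 0; 0, -1]
def sp : Matrix (Fin 2) (Fin 2) ℂ := !![0, 1; 0, 0]
def sm : Matrix (Fin 2) (Fin 2) ℂ := !![0, 0; 1, 0]
def np : Matrix (Fin 2) (Fin 2) ℂ := !![1, 0; 0, 0]
def nm : Matrix (Fin 2) (Fin 2) ℂ := !![0, 0; 0, 1]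

/-- `β₀ = e^{-β}/(e^{-β}+e^{β})`. -/
def b0 (β : ℝ) : ℝ := Real.exp (-β) / (Real.exp (-β) + Real.exp β)

/-- `β₁ = e^{β}/(e^{-β}+e^{β})`. -/
def b1 (β : ℝ) : ℝ := Real.exp β / (Real.exp (-β) + Real.exp β)

/-- The single-spin Gibbs state `ρ_β = diag(β₀, β₁)`. -/
def rhoB (β : ℝ) : Matrix (Fin 2) (Fin 2) ℂ := !![(b0 β : ℂ), 0; 0, (b1 β : ℂ)]

/-- The `N = 2` chain Hamiltonian `H_S = σz⊗I + I⊗σz + σx⊗σx + σy⊗σy`. -/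
def HS2 : Matrix (Fin 2 × Fin 2) (Fin 2 × Fin 2) ℂ :=
  sz ⊗ₖ (1 : Matrix (Fin 2) (Fin 2) ℂ) + (1 : Matrix (Fin 2) (Fin 2) ℂ) ⊗ₖ sz +
    sx ⊗ₖ sx + sy ⊗ₖ sy

/-- The two-bath adjoint Lindblad generator for `N = 2` (baths at sites 1 and 2). -/
def L2star (β β' : ℝ) (ρ : Matrix (Fin 2 × Fin 2) (Fin 2 × Fin 2) ℂ) :
    Matrix (Fin 2 × Fin 2) (Fin 2 × Fin 2) ℂ :=
  (-Complex.I) • (HS2 * ρ - ρ * HS2) +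
    (2 * b0 β : ℂ) • (2 • ((sp ⊗ₖ (1 : Matrix (Fin 2) (Fin 2) ℂ)) * ρ *
        (sm ⊗ₖ (1 : Matrix (Fin 2) (Fin 2) ℂ))) -
      ((nm ⊗ₖ (1 : Matrix (Fin 2) (Fin 2) ℂ)) * ρ + ρ * (nm ⊗ₖ (1 : Matrix (Fin 2) (Fin 2) ℂ)))) +
    (2 * b1 β : ℂ) • (2 • ((sm ⊗ₖ (1 : Matrix (Fin 2) (Fin 2) ℂ)) * ρ *
        (sp ⊗ₖ (1 : Matrix (Fin 2) (Fin 2) ℂ))) -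
      ((np ⊗ₖ (1 : Matrix (Fin 2) (Fin 2) ℂ)) * ρ + ρ * (np ⊗ₖ (1 : Matrix (Fin 2) (Fin 2) ℂ)))) +
    (2 * b0 β' : ℂ) • (2 • (((1 : Matrix (Fin 2) (Fin 2) ℂ) ⊗ₖ sp) * ρ *
        ((1 : Matrix (Fin 2) (Fin 2) ℂ) ⊗ₖ sm)) -
      (((1 : Matrix (Fin 2) (Fin 2) ℂ) ⊗ₖ nm) * ρ + ρ * ((1 : Matrix (Fin 2) (Fin 2) ℂ) ⊗ₖ nm))) +
    (2 * b1 β' : ℂ) • (2 • (((1 : Matrix (Fin 2) (Fin 2) ℂ) ⊗ₖ sm) * ρ *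
        ((1 : Matrix (Fin 2) (Fin 2) ℂ) ⊗ₖ sp)) -
      (((1 : Matrix (Fin 2) (Fin 2) ℂ) ⊗ₖ np) * ρ + ρ * ((1 : Matrix (Fin 2) (Fin 2) ℂ) ⊗ₖ np)))

set_option maxHeartbeats 4000000 in
/-- For `N = 2`, the local states of any stationary density matrix are
`ρ⁽¹⁾ = (ρ_β+ρ_{β'})/2 + ½·(ρ_β−ρ_{β'})/2` and `ρ⁽²⁾ = (ρ_β+ρ_{β'})/2 + ½·(ρ_{β'}−ρ_β)/2`. -/
theorem local_states_N2 (β β' : ℝ) (ρ : Matrix (Fin 2 × Fin 2) (Fin 2 × Fin 2) ℂ)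
    (hherm : ρ.IsHermitian) (hpos : ρ.PosSemidef) (htr : ρ.trace = 1)
    (hstat : L2star β β' ρ = 0) :
    ∀ A : Matrix (Fin 2) (Fin 2) ℂ,
      (ρ * (A ⊗ₖ (1 : Matrix (Fin 2) (Fin 2) ℂ))).trace =
        ((((1 : ℂ) / 2) • (rhoB β + rhoB β') +
            ((1 : ℂ) / 2) • (((1 : ℂ) / 2) • (rhoB β - rhoB β'))) * A).trace ∧
      (ρ * ((1 : Matrix (Fin 2) (Fin 2) ℂ) ⊗ₖ A)).trace =
        ((((1 : ℂ) / 2) • (rhoB β + rhoB β') +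
            ((1 : ℂ) / 2) • (((1 : ℂ) / 2) • (rhoB β' - rhoB β))) * A).trace := by
  have hb : ∀ γ : ℝ, (b1 γ : ℂ) = 1 - (b0 γ : ℂ) := by
    intro γ
    have h : b0 γ + b1 γ = 1 := by
      unfold b0 b1
      rw [← add_div, div_self (ne_of_gt (by positivity))]
    rw [← Complex.ofReal_one, ← Complex.ofReal_sub]
    norm_cast
    linarith
  have hrel1 := hb β
  have hrel2 := hb β'
  unfold L2star at hstat
  simp only [two_smul] at hstat
  have h00 := congrFun (congrFun hstat (0,0)) (0,0)
  simp [sx, sy, sz, sp, sm, np, nm, HS2, Matrix.mul_apply, Fintype.sum_prod_type, Fin.sum_univ_two, Matrix.one_apply] at h00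
  have h11 := congrFun (congrFun hstat (0,1)) (0,1)
  simp [sx, sy, sz, sp, sm, np, nm, HS2, Matrix.mul_apply, Fintype.sum_prod_type, Fin.sum_univ_two, Matrix.one_apply] at h11
  have h22 := congrFun (congrFun hstat (1,0)) (1,0)
  simp [sx, sy, sz, sp, sm, np, nm, HS2, Matrix.mul_apply, Fintype.sum_prod_type, Fin.sum_univ_two, Matrix.one_apply] at h22
  have h33 := congrFun (congrFun hstat (1,1)) (1,1)
  simp [sx, sy, sz, sp, sm, np, nm, HS2, Matrix.mul_apply, Fintype.sum_prod_type, Fin.sum_univ_two, Matrix.one_apply] at h33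
  have h12 := congrFun (congrFun hstat (0,1)) (1,0)
  simp [sx, sy, sz, sp, sm, np, nm, HS2, Matrix.mul_apply, Fintype.sum_prod_type, Fin.sum_univ_two, Matrix.one_apply] at h12
  have h21 := congrFun (congrFun hstat (1,0)) (0,1)
  simp [sx, sy, sz, sp, sm, np, nm, HS2, Matrix.mul_apply, Fintype.sum_prod_type, Fin.sum_univ_two, Matrix.one_apply] at h21
  have h20 := congrFun (congrFun hstat (1,0)) (0,0)
  simp [sx, sy, sz, sp, sm, np, nm, HS2, Matrix.mul_apply, Fintype.sum_prod_type, Fin.sum_univ_two, Matrix.one_apply] at h20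
  have h31 := congrFun (congrFun hstat (1,1)) (0,1)
  simp [sx, sy, sz, sp, sm, np, nm, HS2, Matrix.mul_apply, Fintype.sum_prod_type, Fin.sum_univ_two, Matrix.one_apply] at h31
  have h10 := congrFun (congrFun hstat (0,1)) (0,0)
  simp [sx, sy, sz, sp, sm, np, nm, HS2, Matrix.mul_apply, Fintype.sum_prod_type, Fin.sum_univ_two, Matrix.one_apply] at h10
  have h32 := congrFun (congrFun hstat (1,1)) (1,0)
  simp [sx, sy, sz, sp, sm, np, nm, HS2, Matrix.mul_apply, Fintype.sum_prod_type, Fin.sum_univ_two, Matrix.one_apply] at h32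
  simp [Matrix.trace, Matrix.diag, Fintype.sum_prod_type, Fin.sum_univ_two] at htr
  have tA : ρ 0 0 + ρ (0,1) (0,1) = (3*((b0 β : ℂ)) + ((b0 β' : ℂ)))/4 := by
    linear_combination ((-1/8)) * h00 + ((-1/16)) * h11 + ((1/16)) * h22 + ((1/8)) * h33 + ((-1/16)*Complex.I) * h12 + ((1/16)*Complex.I) * h21 + ((1/4)*((b0 β' : ℂ)) + (3/4)*((b0 β : ℂ))) * htr + (((-3/4)) * (ρ 0 0) + ((-3/4)) * (ρ (0,1) (0,1)) + ((1/8)*Complex.I) * (ρ (1,0) (0,1)) + ((-1/8)*Complex.I) * (ρ (0,1) (1,0))) * hrel1 + (((-1/4)) * (ρ 0 0) + ((-1/4)) * (ρ (1,0) (1,0)) + ((1/8)*Complex.I) * (ρ (1,0) (0,1)) + ((-1/8)*Complex.I) * (ρ (0,1) (1,0))) * hrel2 + (((1/4)) * (ρ (0,1) (0,1)) + ((-1/4)) * (ρ (1,0) (1,0))) * Complex.I_sq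
  have tB : ρ (1,0) (1,0) + ρ 1 1 = (3*((b1 β : ℂ)) + ((b1 β' : ℂ)))/4 := by
    linear_combination ((1/8)) * h00 + ((1/16)) * h11 + ((-1/16)) * h22 + ((-1/8)) * h33 + ((1/16)*Complex.I) * h12 + ((-1/16)*Complex.I) * h21 + ((1/4)*((b1 β' : ℂ)) + (3/4)*((b1 β : ℂ))) * htr + (((-3/4)) * (ρ (1,0) (1,0)) + ((-3/4)) * (ρ 1 1) + ((-1/8)*Complex.I) * (ρ (1,0) (0,1)) + ((1/8)*Complex.I) * (ρ (0,1) (1,0))) * hrel1 + (((-1/4)) * (ρ 1 1) + ((-1/4)) * (ρ (0,1) (0,1)) + ((-1/8)*Complex.I) * (ρ (1,0) (0,1)) + ((1/8)*Complex.I) * (ρ (0,1) (1,0))) * hrel2 + (((1/4)) * (ρ (1,0) (1,0)) + ((-1/4)) * (ρ (0,1) (0,1))) * Complex.I_sq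
  have tE : ρ 0 0 + ρ (1,0) (1,0) = (((b0 β : ℂ)) + 3*((b0 β' : ℂ)))/4 := by
    linear_combination ((-1/8)) * h00 + ((1/16)) * h11 + ((-1/16)) * h22 + ((1/8)) * h33 + ((1/16)*Complex.I) * h12 + ((-1/16)*Complex.I) * h21 + ((3/4)*((b0 β' : ℂ)) + (1/4)*((b0 β : ℂ))) * htr + (((-1/4)) * (ρ 0 0) + ((-1/4)) * (ρ (0,1) (0,1)) + ((-1/8)*Complex.I) * (ρ (1,0) (0,1)) + ((1/8)*Complex.I) * (ρ (0,1) (1,0))) * hrel1 + (((-3/4)) * (ρ 0 0) + ((-3/4)) * (ρ (1,0) (1,0)) + ((-1/8)*Complex.I) * (ρ (1,0) (0,1)) + ((1/8)*Complex.I) * (ρ (0,1) (1,0))) * hrel2 + (((1/4)) * (ρ (1,0) (1,0)) + ((-1/4)) * (ρ (0,1) (0,1))) * Complex.I_sq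
  have tF : ρ (0,1) (0,1) + ρ 1 1 = (((b1 β : ℂ)) + 3*((b1 β' : ℂ)))/4 := by
    linear_combination ((1/8)) * h00 + ((-1/16)) * h11 + ((1/16)) * h22 + ((-1/8)) * h33 + ((-1/16)*Complex.I) * h12 + ((1/16)*Complex.I) * h21 + ((3/4)*((b1 β' : ℂ)) + (1/4)*((b1 β : ℂ))) * htr + (((-1/4)) * (ρ 1 1) + ((-1/4)) * (ρ (1,0) (1,0)) + ((1/8)*Complex.I) * (ρ (1,0) (0,1)) + ((-1/8)*Complex.I) * (ρ (0,1) (1,0))) * hrel1 + (((-3/4)) * (ρ (0,1) (0,1)) + ((-3/4)) * (ρ 1 1) + ((1/8)*Complex.I) * (ρ (1,0) (0,1)) + ((-1/8)*Complex.I) * (ρ (0,1) (1,0))) * hrel2 + (((1/4)) * (ρ (0,1) (0,1)) + ((-1/4)) * (ρ (1,0) (1,0))) * Complex.I_sq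
  have hDne : ((28:ℂ) + 96*Complex.I - (4 - 8*((b0 β : ℂ)))*(4 - 8*((b0 β' : ℂ)))) ≠ 0 := by
    intro hc
    have h2 := congrArg Complex.im hc
    simp [Complex.ext_iff] at h2
  have hC0 : ((28:ℂ) + 96*Complex.I - (4 - 8*((b0 β : ℂ)))*(4 - 8*((b0 β' : ℂ)))) * (ρ (1,0) 0 + ρ 1 (0,1)) = 0 := by
    linear_combination (14 + -30*Complex.I + -8*((b0 β : ℂ))) * h20 + (6 + -30*Complex.I + 8*((b0 β : ℂ))) * h31 + (-4 + 6*Complex.I + -8*((b0 β : ℂ)) + -24*((b0 β : ℂ))*Complex.I) * h10 + (12 + 18*Complex.I + -8*((b0 β : ℂ)) + -24*((b0 β : ℂ))*Complex.I) * h32 + ((28 + -60*Complex.I + -16*((b0 β : ℂ))) * (ρ (1,0) 0) + (12 + -60*Complex.I + 16*((b0 β : ℂ))) * (ρ 1 (0,1)) + (-64 + -48*Complex.I) * (ρ (0,1) 0)) * hrel1 + ((32 + -64*((b0 β : ℂ))) * (ρ (1,0) 0) + (-8 + 12*Complex.I + -16*((b0 β : ℂ)) + -48*((b0 β : ℂ))*Complex.I)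 * (ρ (0,1) 0) + (24 + 36*Complex.I + -16*((b0 β : ℂ)) + -48*((b0 β : ℂ))*Complex.I) * (ρ 1 (1,0))) * hrel2 + ((72 + -48*((b0 β : ℂ))) * (ρ (1,0) 0) + (24 + 48*((b0 β : ℂ))) * (ρ 1 (0,1)) + (-72 + 48*((b0 β : ℂ))) * (ρ (0,1) 0) + (24 + 48*((b0 β : ℂ))) * (ρ 1 (1,0))) * Complex.I_sq
  have tC : ρ (1,0) 0 + ρ 1 (0,1) = 0 := by
    rcases mul_eq_zero.mp hC0 with h | h
    · exact absurd h hDne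
    · exact h
  have hG0 : ((28:ℂ) + 96*Complex.I - (4 - 8*((b0 β : ℂ)))*(4 - 8*((b0 β' : ℂ)))) * (ρ (0,1) 0 + ρ 1 (1,0)) = 0 := by
    linear_combination (14 + -30*Complex.I + -8*((b0 β' : ℂ))) * h10 + (6 + -30*Complex.I + 8*((b0 β' : ℂ))) * h32 + (-4 + 6*Complex.I + -8*((b0 β' : ℂ)) + -24*((b0 β' : ℂ))*Complex.I) * h20 + (12 + 18*Complex.I + -8*((b0 β' : ℂ)) + -24*((b0 β' : ℂ))*Complex.I) * h31 + ((32 + -64*((b0 β' : ℂ))) * (ρ (0,1) 0) + (-8 + 12*Complex.I + -16*((b0 β' : ℂ)) + -48*((b0 β' : ℂ))*Complex.I) * (ρ (1,0) 0) + (24 + 36*Complex.I + -16*((b0 β' : ℂ)) + -48*((b0 β' : ℂ))*Complex.I) * (ρ 1 (0,1))) * hrel1 + ((28 + -60*Complex.I + -16*((b0 β' : ℂ))) * (ρ (0,1) 0) + (12 + -60*Complex.I + 16*((b0 β' : ℂ))) * (ρ 1 (1,0)) + (-64 + -48*Complex.I) * (ρ (1,0) 0)) * hrel2 + ((72 + -48*((b0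 β' : ℂ))) * (ρ (0,1) 0) + (24 + 48*((b0 β' : ℂ))) * (ρ 1 (1,0)) + (-72 + 48*((b0 β' : ℂ))) * (ρ (1,0) 0) + (24 + 48*((b0 β' : ℂ))) * (ρ 1 (0,1))) * Complex.I_sq
  have tG : ρ (0,1) 0 + ρ 1 (1,0) = 0 := by
    rcases mul_eq_zero.mp hG0 with h | h
    · exact absurd h hDne
    · exact h
  have e1 := congrFun (congrFun hherm 0) (1,0)
  have e2 := congrFun (congrFun hherm (0,1)) 1
  have e3 := congrFun (congrFun hherm 0) (0,1)
  have e4 := congrFun (congrFun hherm (1,0)) 1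
  rw [Matrix.conjTranspose_apply] at e1 e2 e3 e4
  have tD : ρ 0 (1,0) + ρ (0,1) 1 = 0 := by
    rw [← e1, ← e2, ← star_add, tC, star_zero]
  have tH : ρ 0 (0,1) + ρ (1,0) 1 = 0 := by
    rw [← e3, ← e4, ← star_add, tG, star_zero]
  intro A
  constructor
  · simp [Matrix.trace, Matrix.diag, Matrix.mul_apply, Fintype.sum_prod_type,
      Fin.sum_univ_two, Matrix.one_apply, rhoB]
    linear_combination (A 0 0) * tA + (A 1 1) * tB + (A 0 1) * tC + (A 1 0) * tD
  · simp [Matrix.trace, Matrix.diag, Matrix.mul_apply, Fintype.sum_prod_type,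
      Fin.sum_univ_two, Matrix.one_apply, rhoB]
    linear_combination (A 0 0) * tE + (A 1 1) * tF + (A 0 1) * tG + (A 1 0) * tH
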